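/- Let k ≥ 1 and let f: {0,1}^n → {0,1} be computed by a k-DNF formula: there is a finite family of terms (P_j, N_j) with P_j, N_j ⊆ [n] disjoint and |P_j| + |N_j| ≤ k, such that f(x) = 1 if and only if for some j, x_i = 1 for all i ∈ P_j and x_i = 0 for all i ∈ N_j. Then f is a k-self-bounding function. -/
import Mathlib


noncomputable section

/-- A function `f : {0,1}^n → ℝ` is `a`-self-bounding. -/
def SelfBounding (n : ℕ) (a : ℝ) (f : (Fin n → Bool) → ℝ) : Prop :=
  ∀ x : Fin n → Bool,
    (∀ i : Fin n,
      f x - min (f (Function.update x i false)) (f (Function.update x i true)) ≤ 1) ∧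
    ∑ i : Fin n,
      (f x - min (f (Function.update x i false)) (f (Function.update x i true))) ≤ a * f x

theorem kDNF_is_k_selfbounding (n k : ℕ) (hk : 1 ≤ k)
    (T : Finset (Finset (Fin n) × Finset (Fin n)))
    (hT : ∀ t ∈ T, Disjoint t.1 t.2 ∧ t.1.card + t.2.card ≤ k)
    (f : (Fin n → Bool) → ℝ)
    (hf01 : ∀ x, f x = 0 ∨ f x = 1)
    (hf : ∀ x, f x = 1 ↔
      ∃ t ∈ T, (∀ i ∈ t.1, x i = true) ∧ (∀ i ∈ t.2, x i = false)) :
    SelfBounding n (k : ℝ) f := by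
  intro x
  have h0 : ∀ y, (0:ℝ) ≤ f y := fun y => by rcases hf01 y with h|h <;> simp [h]
  have h1 : ∀ y, f y ≤ 1 := fun y => by rcases hf01 y with h|h <;> simp [h]
  have hmin0 : ∀ i : Fin n,
      (0:ℝ) ≤ min (f (Function.update x i false)) (f (Function.update x i true)) :=
    fun i => le_min (h0 _) (h0 _)
  constructor
  · intro i
    have := hmin0 i
    linarith [h1 x]
  · rcases hf01 x with hx | hx
    · have : ∀ i ∈ Finset.univ, f x -
          min (f (Function.update x i false)) (f (Function.update x i true)) ≤ (0:ℝ) := by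
        intro i _
        have := hmin0 i
        rw [hx]; linarith
      calc ∑ i : Fin n, (f x -
            min (f (Function.update x i false)) (f (Function.update x i true)))
          ≤ ∑ _i : Fin n, (0:ℝ) := Finset.sum_le_sum this
        _ = 0 := by simp
        _ = (k:ℝ) * f x := by rw [hx]; ring
    · obtain ⟨t, htT, ht1, ht2⟩ := (hf x).1 hx
      have hterm : ∀ i : Fin n, f x -
          min (f (Function.update x i false)) (f (Function.update x i true)) ≤
          if i ∈ t.1 ∪ t.2 then (1:ℝ) else 0 := by
        intro i
        by_cases hi : i ∈ t.1 ∪ t.2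
        · rw [if_pos hi]
          have := hmin0 i
          linarith [h1 x]
        · rw [if_neg hi]
          have hne : ∀ b, f (Function.update x i b) = 1 := by
            intro b
            rw [hf]
            refine ⟨t, htT, fun j hj => ?_, fun j hj => ?_⟩
            · rw [Function.update_of_ne (fun h => hi (by subst h; exact Finset.mem_union_left _ hj))]
              exact ht1 j hj
            · rw [Function.update_of_ne (fun h => hi (by subst h; exact Finset.mem_union_right _ hj))]
              exact ht2 j hj
          rw [hx, hne, hne]; simp
      calc ∑ i : Fin n, (f x -
            min (f (Function.update x i false)) (f (Function.update x i true)))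
          ≤ ∑ i : Fin n, (if i ∈ t.1 ∪ t.2 then (1:ℝ) else 0) :=
            Finset.sum_le_sum fun i _ => hterm i
        _ = ((t.1 ∪ t.2).card : ℝ) := by
            rw [Finset.sum_ite_mem, Finset.univ_inter, Finset.sum_const, nsmul_eq_mul, mul_one]
        _ ≤ ((t.1.card + t.2.card : ℕ) : ℝ) := by
            exact_mod_cast Finset.card_union_le _ _
        _ ≤ (k:ℝ) := by exact_mod_cast (hT t htT).2
        _ = (k:ℝ) * f x := by rw [hx]; ring
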